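/- Let D ≥ 1, σ > 0, v ∈ ℝ^D a unit vector, Φ ∈ ℝ^{D×D} and Θ ∈ ℝ^{D×D}. Let ξ be a standard real Gaussian random variable (mean 0, variance 1) and ε a random vector in ℝ^D whose coordinates are independent standard real Gaussians, with ξ and ε independent. Then the denoising score matching objective J(Θ) = E[ ‖ Φ Θ (ξ v + σ ε) + ε/σ ‖₂² ] is finite and equals ‖ Φ Θ v ‖₂² + ‖ σ Φ Θ + I/σ ‖_F², where ‖·‖_F denotes the Frobenius norm. -/

import Mathlib

open Real MeasureTheory ProbabilityTheory

lemma gauss_pdf_eq (x : ℝ) :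
    gaussianPDFReal 0 1 x = (Real.sqrt (2*π))⁻¹ * Real.exp (-x^2/2) := by
  simp [gaussianPDFReal]

lemma gauss_integral (g : ℝ → ℝ) :
    ∫ x, g x ∂(gaussianReal 0 1) = ∫ x, gaussianPDFReal 0 1 x * g x := by
  rw [gaussianReal_of_var_ne_zero _ one_ne_zero]
  have : (volume.withDensity (gaussianPDF 0 1))
      = volume.withDensity (fun x => ((gaussianPDFReal 0 1 x).toNNReal : ENNReal)) := rfl
  rw [this, integral_withDensity_eq_integral_smul
    (measurable_gaussianPDFReal 0 1).real_toNNReal]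
  congr 1; ext x
  simp [NNReal.smul_def, Real.coe_toNNReal _ (gaussianPDFReal_nonneg 0 1 x)]

lemma gauss_integrable_iff (g : ℝ → ℝ) :
    Integrable g (gaussianReal 0 1) ↔
      Integrable (fun x => gaussianPDFReal 0 1 x * g x) volume := by
  rw [gaussianReal_of_var_ne_zero _ one_ne_zero]
  have : (volume.withDensity (gaussianPDF 0 1))
      = volume.withDensity (fun x => ((gaussianPDFReal 0 1 x).toNNReal : ENNReal)) := rfl
  rw [this, integrable_withDensity_iff_integrable_smul
    (measurable_gaussianPDFReal 0 1).real_toNNReal]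
  apply integrable_congr
  filter_upwards with x
  simp [NNReal.smul_def, Real.coe_toNNReal _ (gaussianPDFReal_nonneg 0 1 x)]

lemma integrable_x_gauss : Integrable (fun x : ℝ => x) (gaussianReal 0 1) := by
  rw [gauss_integrable_iff]
  have h := (integrable_rpow_mul_exp_neg_mul_sq (by norm_num : (0:ℝ) < 1/2)
    (by norm_num : (-1:ℝ) < 1)).const_mul (Real.sqrt (2*π))⁻¹
  apply Integrable.congr h
  filter_upwards with x
  rw [gauss_pdf_eq, Real.rpow_one]
  ring_nf

lemma integrable_sq_gauss : Integrable (fun x : ℝ => x^2) (gaussianReal 0 1) := by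
  rw [gauss_integrable_iff]
  have h := (integrable_rpow_mul_exp_neg_mul_sq (by norm_num : (0:ℝ) < 1/2)
    (by norm_num : (-1:ℝ) < 2)).const_mul (Real.sqrt (2*π))⁻¹
  apply Integrable.congr h
  filter_upwards with x
  rw [gauss_pdf_eq]
  rw [show ((2:ℝ):ℝ) = ((2:ℕ):ℝ) by norm_num, Real.rpow_natCast]
  ring_nf

lemma integral_x_gauss : ∫ x, x ∂(gaussianReal 0 1) = 0 := by
  rw [gauss_integral]
  have h : ∫ x : ℝ, gaussianPDFReal 0 1 x * x
      = ∫ x : ℝ, gaussianPDFReal 0 1 (-x) * (-x) := by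
    exact (integral_neg_eq_self (fun x : ℝ => gaussianPDFReal 0 1 x * x) volume).symm
  have heven : ∀ x : ℝ, gaussianPDFReal 0 1 (-x) = gaussianPDFReal 0 1 x := by
    intro x; rw [gauss_pdf_eq, gauss_pdf_eq, neg_pow]; norm_num
  simp_rw [heven, mul_neg] at h
  rw [integral_neg] at h
  linarith

lemma integral_sq_gauss : ∫ x, x^2 ∂(gaussianReal 0 1) = 1 := by
  rw [gauss_integral]
  set g : ℝ → ℝ := fun x => gaussianPDFReal 0 1 x * x ^ 2 with hg
  have hgi : Integrable g volume := (gauss_integrable_iff _).mp integrable_sq_gauss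
  have hsplit : (∫ x in Set.Ioi (0:ℝ), g x) + ∫ x in (Set.Ioi (0:ℝ))ᶜ, g x = ∫ x, g x :=
    integral_add_compl measurableSet_Ioi hgi
  have hcompl : (Set.Ioi (0:ℝ))ᶜ = Set.Iic 0 := by simp
  have heven : ∀ x : ℝ, g (-x) = g x := by
    intro x; simp only [hg]; rw [gauss_pdf_eq, gauss_pdf_eq, neg_pow]; norm_num
  have hIic : (∫ x in Set.Iic (0:ℝ), g x) = ∫ x in Set.Ioi (0:ℝ), g x := by
    have h0 := integral_comp_neg_Iic (0:ℝ) g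
    rw [neg_zero] at h0
    rw [← h0]
    exact setIntegral_congr_fun measurableSet_Iic (fun x _ => (heven x).symm)
  have hIoi : (∫ x in Set.Ioi (0:ℝ), g x)
      = (Real.sqrt (2*π))⁻¹ * ((1/2 : ℝ) ^ (-((2:ℝ)+1)/2) * (1/2) * Real.Gamma (((2:ℝ)+1)/2)) := by
    rw [← integral_rpow_mul_exp_neg_mul_rpow (by norm_num : (0:ℝ) < 2)
      (by norm_num : (-1:ℝ) < 2) (by norm_num : (0:ℝ) < 1/2), ← integral_const_mul]
    refine setIntegral_congr_fun measurableSet_Ioi (fun x _ => ?_)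
    simp only [hg]
    rw [gauss_pdf_eq]
    rw [show ((2:ℝ):ℝ) = ((2:ℕ):ℝ) by norm_num, Real.rpow_natCast]
    ring_nf
  have hGamma : Real.Gamma (((2:ℝ)+1)/2) = (1/2) * Real.sqrt π := by
    have : ((2:ℝ)+1)/2 = 1/2 + 1 := by norm_num
    rw [this, Real.Gamma_add_one (by norm_num), Real.Gamma_one_half_eq]
  have hpow : (1/2 : ℝ) ^ (-((2:ℝ)+1)/2) = 2 * Real.sqrt 2 := by
    have h1 : (1/2 : ℝ) ^ (-((2:ℝ)+1)/2) = ((2:ℝ) ^ (((2:ℝ)+1)/2) : ℝ) := by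
      rw [show (1/2:ℝ) = 2⁻¹ by norm_num, ← Real.rpow_neg_one,
        ← Real.rpow_mul (by norm_num : (0:ℝ) ≤ 2)]
      norm_num
    rw [h1]
    have : (((2:ℝ)+1)/2 : ℝ) = 1 + 1/2 := by norm_num
    rw [this, Real.rpow_add (by norm_num), Real.rpow_one, ← Real.sqrt_eq_rpow]
  have hsqrt : Real.sqrt (2*π) = Real.sqrt 2 * Real.sqrt π :=
    Real.sqrt_mul (by norm_num) π
  have h2 : Real.sqrt 2 > 0 := Real.sqrt_pos.mpr (by norm_num)
  have hp : Real.sqrt π > 0 := Real.sqrt_pos.mpr Real.pi_pos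
  rw [← hsplit, hcompl, hIic, hIoi, hGamma, hpow, hsqrt]
  field_simp
  norm_num

section RV
variable {Ω : Type*} [MeasurableSpace Ω] {P : Measure Ω} [IsProbabilityMeasure P]

lemma memLp2_of_gauss {X : Ω → ℝ} (hXm : Measurable X)
    (hX : Measure.map X P = gaussianReal 0 1) : MemLp X 2 P := by
  have h : MemLp (id : ℝ → ℝ) 2 (Measure.map X P) := by
    rw [hX, memLp_two_iff_integrable_sq aestronglyMeasurable_id]
    simpa using integrable_sq_gauss
  exact (memLp_map_measure_iff aestronglyMeasurable_id hXm.aemeasurable).mp h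

lemma mean_of_gauss {X : Ω → ℝ} (hXm : Measurable X)
    (hX : Measure.map X P = gaussianReal 0 1) : ∫ ω, X ω ∂P = 0 := by
  have h : ∫ y, y ∂(Measure.map X P) = ∫ ω, X ω ∂P :=
    integral_map (f := fun x : ℝ => x) hXm.aemeasurable
      (by rw [hX]; exact aestronglyMeasurable_id)
  rw [← h, hX]; exact integral_x_gauss

lemma moment2_of_gauss {X : Ω → ℝ} (hXm : Measurable X)
    (hX : Measure.map X P = gaussianReal 0 1) : ∫ ω, (X ω)^2 ∂P = 1 := by
  have h : ∫ y, y^2 ∂(Measure.map X P) = ∫ ω, (X ω)^2 ∂P :=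
    integral_map (f := fun x : ℝ => x^2) hXm.aemeasurable
      (by rw [hX]; exact (measurable_id.pow_const 2).aestronglyMeasurable)
  rw [← h, hX]; exact integral_sq_gauss

lemma variance_of_gauss {X : Ω → ℝ} (hXm : Measurable X)
    (hX : Measure.map X P = gaussianReal 0 1) : variance X P = 1 := by
  rw [variance_eq_sub (memLp2_of_gauss hXm hX)]
  have h2 : ∫ ω, (X ^ 2) ω ∂P = 1 := by
    simpa [Pi.pow_apply] using moment2_of_gauss hXm hX
  rw [h2, mean_of_gauss hXm hX]
  norm_num

end RV

lemma key {D : ℕ} {Ω : Type*} [MeasurableSpace Ω] {P : Measure Ω} [IsProbabilityMeasure P]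
    (a : ℝ) (m : Fin D → ℝ)
    (ξ : Ω → ℝ) (ε : Ω → Fin D → ℝ)
    (hξmeas : Measurable ξ) (hεmeas : Measurable ε)
    (hξ : Measure.map ξ P = gaussianReal 0 1)
    (hε : ∀ i, Measure.map (fun ω => ε ω i) P = gaussianReal 0 1)
    (hεindep : iIndepFun (fun i ω => ε ω i) P)
    (hindep : IndepFun ξ ε P) :
    Integrable (fun ω => (a * ξ ω + ∑ j, m j * ε ω j)^2) P ∧
    ∫ ω, (a * ξ ω + ∑ j, m j * ε ω j)^2 ∂P = a^2 + ∑ j, m j ^ 2 := by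
  have hεj : ∀ j, Measurable fun ω => ε ω j := fun j => (measurable_pi_apply j).comp hεmeas
  have hξ2 := memLp2_of_gauss hξmeas hξ
  have hε2 : ∀ j, MemLp (fun ω => ε ω j) 2 P := fun j => memLp2_of_gauss (hεj j) (hε j)
  have hA : MemLp (fun ω => a * ξ ω) 2 P := hξ2.const_mul a
  have hS : MemLp (fun ω => ∑ j, m j * ε ω j) 2 P :=
    memLp_finset_sum _ (fun j _ => (hε2 j).const_mul (m j))
  have hY : MemLp (fun ω => a * ξ ω + ∑ j, m j * ε ω j) 2 P := hA.add hS
  -- independence of the two pieces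
  have hindep' : IndepFun (fun ω => a * ξ ω) (fun ω => ∑ j, m j * ε ω j) P := by
    have hφ : Measurable fun x : ℝ => a * x := measurable_const_mul a
    have hψ : Measurable fun y : Fin D → ℝ => ∑ j, m j * y j := by
      exact Finset.measurable_sum (f := fun j (y : Fin D → ℝ) => m j * y j) _ fun j _ => by fun_prop
    exact hindep.comp hφ hψ
  -- mean is zero
  have hmean : ∫ ω, (a * ξ ω + ∑ j, m j * ε ω j) ∂P = 0 := by
    rw [integral_add (hA.integrable one_le_two) (hS.integrable one_le_two),
      integral_const_mul, mean_of_gauss hξmeas hξ,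
      integral_finset_sum _ (fun j _ => ((hε2 j).integrable one_le_two).const_mul (m j))]
    simp only [integral_const_mul]
    rw [Finset.sum_congr rfl (fun j _ => by rw [mean_of_gauss (hεj j) (hε j)])]
    simp
  -- variance of the sum part
  have hvarS : variance (fun ω => ∑ j, m j * ε ω j) P = ∑ j, m j ^ 2 := by
    have hpair : Set.Pairwise ↑(Finset.univ : Finset (Fin D))
        (fun i j => IndepFun (fun ω => m i * ε ω i) (fun ω => m j * ε ω j) P) := by
      intro i _ j _ hij
      exact (hεindep.indepFun hij).comp (measurable_const_mul (m i)) (measurable_const_mul (m j))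
    have h := IndepFun.variance_sum (X := fun j => fun ω => m j * ε ω j)
      (s := Finset.univ) (fun j _ => (hε2 j).const_mul (m j)) hpair
    have heq : (∑ j : Fin D, fun ω => m j * ε ω j) = fun ω => ∑ j, m j * ε ω j := by
      funext ω; simp [Finset.sum_apply]
    rw [heq] at h
    rw [h, Finset.sum_congr rfl (fun j _ => ?_)]
    rw [variance_const_mul, variance_of_gauss (hεj j) (hε j), mul_one]
  have hvar : variance (fun ω => a * ξ ω + ∑ j, m j * ε ω j) P = a^2 + ∑ j, m j ^ 2 := by
    have h := hindep'.variance_add hA hS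
    have heq : ((fun ω => a * ξ ω) + fun ω => ∑ j, m j * ε ω j)
        = fun ω => a * ξ ω + ∑ j, m j * ε ω j := rfl
    rw [heq] at h
    rw [h, variance_const_mul, variance_of_gauss hξmeas hξ, mul_one, hvarS]
  refine ⟨hY.integrable_sq, ?_⟩
  have h := variance_eq_sub hY
  simp only [Pi.pow_apply] at h
  rw [hmean] at h
  rw [← hvar, h]
  norm_num

open Matrix MeasureTheory ProbabilityTheory

/-- Closed-form evaluation of the denoising score matching objective for a linear network
`Ω = ΦΘ` at a fixed noise level `σ`, on data `ξ v ∼ N(0, v vᵀ)`: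
`E[‖ΦΘ(ξv + σε) + ε/σ‖₂²] = ‖ΦΘv‖₂² + ‖σΦΘ + I/σ‖_F²`. -/
theorem stmt2 (D : ℕ) (hD : 1 ≤ D) (σ : ℝ) (hσ : 0 < σ)
    (v : Fin D → ℝ) (hv : ∑ i, v i ^ 2 = 1)
    (Φ Θ : Matrix (Fin D) (Fin D) ℝ)
    {Ω : Type*} [MeasurableSpace Ω] (P : Measure Ω) [IsProbabilityMeasure P]
    (ξ : Ω → ℝ) (ε : Ω → Fin D → ℝ)
    (hξmeas : Measurable ξ) (hεmeas : Measurable ε)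
    (hξ : Measure.map ξ P = gaussianReal 0 1)
    (hε : ∀ i, Measure.map (fun ω => ε ω i) P = gaussianReal 0 1)
    (hεindep : iIndepFun (fun i ω => ε ω i) P)
    (hindep : IndepFun ξ ε P) :
    Integrable (fun ω =>
        ∑ i, (((Φ * Θ) *ᵥ (ξ ω • v + σ • ε ω)) i + σ⁻¹ * ε ω i) ^ 2) P ∧
    ∫ ω, (∑ i, (((Φ * Θ) *ᵥ (ξ ω • v + σ • ε ω)) i + σ⁻¹ * ε ω i) ^ 2) ∂P =
      ∑ i, ((Φ * Θ) *ᵥ v) i ^ 2 +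
        ∑ i, ∑ j, (σ • (Φ * Θ) + σ⁻¹ • (1 : Matrix (Fin D) (Fin D) ℝ)) i j ^ 2 := by
  set A := Φ * Θ with hA
  set M := σ • A + σ⁻¹ • (1 : Matrix (Fin D) (Fin D) ℝ) with hM
  have hpt : ∀ (i : Fin D) (ω : Ω),
      (A *ᵥ (ξ ω • v + σ • ε ω)) i + σ⁻¹ * ε ω i
        = (A *ᵥ v) i * ξ ω + ∑ j, M i j * ε ω j := by
    intro i ω
    simp only [hM, mulVec, dotProduct, Pi.add_apply, Pi.smul_apply, smul_eq_mul,
      Matrix.add_apply, Matrix.smul_apply, Matrix.one_apply, add_mul, mul_add,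
      Finset.sum_add_distrib, mul_ite, mul_one, mul_zero, ite_mul, zero_mul,
      Finset.sum_ite_eq, Finset.mem_univ, if_true, Finset.mul_sum, Finset.sum_mul]
    ring_nf
    have e1 : ∑ x : Fin D, A i x * ξ ω * v x = ∑ x : Fin D, A i x * v x * ξ ω :=
      Finset.sum_congr rfl fun j _ => by ring
    have e2 : ∑ x : Fin D, A i x * σ * ε ω x = ∑ x : Fin D, σ * A i x * ε ω x :=
      Finset.sum_congr rfl fun j _ => by ring
    rw [e1, e2, add_assoc]
    have e3 : ∑ x : Fin D, ξ ω * A i x * v x = ∑ x : Fin D, A i x * v x * ξ ω :=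
      Finset.sum_congr rfl fun j _ => by ring
    rw [e3]; ring
  have hkey : ∀ i : Fin D,
      Integrable (fun ω => ((A *ᵥ v) i * ξ ω + ∑ j, M i j * ε ω j)^2) P ∧
      ∫ ω, ((A *ᵥ v) i * ξ ω + ∑ j, M i j * ε ω j)^2 ∂P
        = (A *ᵥ v) i ^ 2 + ∑ j, M i j ^ 2 :=
    fun i => key ((A *ᵥ v) i) (fun j => M i j) ξ ε hξmeas hεmeas hξ hε hεindep hindep
  have hfun : ∀ i : Fin D, (fun ω => ((A *ᵥ (ξ ω • v + σ • ε ω)) i + σ⁻¹ * ε ω i) ^ 2)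
      = fun ω => ((A *ᵥ v) i * ξ ω + ∑ j, M i j * ε ω j)^2 :=
    fun i => funext fun ω => by rw [hpt i ω]
  constructor
  · exact integrable_finset_sum _ (fun i _ => (hfun i) ▸ (hkey i).1)
  · rw [integral_finset_sum _ (fun i _ => (hfun i) ▸ (hkey i).1)]
    have heach : ∀ i : Fin D, ∫ ω, ((A *ᵥ (ξ ω • v + σ • ε ω)) i + σ⁻¹ * ε ω i) ^ 2 ∂P
        = (A *ᵥ v) i ^ 2 + ∑ j, M i j ^ 2 := by
      intro i
      rw [show (fun ω => ((A *ᵥ (ξ ω • v + σ • ε ω)) i + σ⁻¹ * ε ω i) ^ 2)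
        = fun ω => ((A *ᵥ v) i * ξ ω + ∑ j, M i j * ε ω j)^2 from hfun i]
      exact (hkey i).2
    rw [Finset.sum_congr rfl (fun i _ => heach i), Finset.sum_add_distrib]
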